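/- Let Y be a finite type with pmf q of full support, p a pmf on Y, and g : Y → ℝ with E_{y∼p}[g(y)] = 0 (score identity). For i.i.d. samples y₁,...,y_N from q, define the in-sample mean baseline estimator using advantages A_i = r(y_i) − (1/N)∑_j r(y_j) and weights w_i = p(y_i)/q(y_i). Then E[(1/N)∑_i w_i A_i g(y_i)] = (1 − 1/N) · E_{y∼p}[r(y) g(y)]. -/

import Mathlib

open MeasureTheory ProbabilityTheory

/-- In-sample second-turn group-mean baseline yields `(1 - 1/N)` shrinkage: for i.i.d.
samples `y₁,...,y_N` from `q`, importance weights `w_i = p (y i) / q (y i)`, advantages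
`A_i = r (y i) - (1/N) ∑ j, r (y j)`, and a score function `g` with `∑ y, p y * g y = 0`,
the expectation of `(1/N) ∑ i, w_i * A_i * g (y i)` equals
`(1 - 1/N) * ∑ y, p y * (r y * g y)`. -/
theorem in_sample_mean_baseline_shrinkage
    {Y : Type*} [Fintype Y] [MeasurableSpace Y] [MeasurableSingletonClass Y]
    {Ω : Type*} [MeasurableSpace Ω] (P : Measure Ω) [IsProbabilityMeasure P]
    (q : Y → ℝ) (hq0 : ∀ a, 0 < q a) (hq1 : ∑ a, q a = 1)
    (p : Y → ℝ) (hp0 : ∀ a, 0 ≤ p a) (hp1 : ∑ a, p a = 1)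
    (r g : Y → ℝ) (hscore : ∑ a, p a * g a = 0)
    (N : ℕ) (hN : 1 ≤ N) (y : Fin N → Ω → Y)
    (hmeas : ∀ i, Measurable (y i))
    (hindep : iIndepFun y P)
    (hlaw : ∀ i a, (P {ω | y i ω = a}).toReal = q a) :
    ∫ ω, (1 / (N : ℝ)) * ∑ i, (p (y i ω) / q (y i ω)) *
        (r (y i ω) - (1 / (N : ℝ)) * ∑ j, r (y j ω)) * g (y i ω) ∂P
      = (1 - 1 / (N : ℝ)) * ∑ a, p a * (r a * g a) := by
  classical
  have hqne : ∀ a, q a ≠ 0 := fun a => (hq0 a).ne'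
  set S : ℝ := ∑ a, p a * (r a * g a) with hS
  set φ : Y → ℝ := fun a => p a / q a * r a * g a with hφdef
  set ψ : Y → ℝ := fun a => p a / q a * g a with hψdef
  -- measurability and integrability of compositions
  have hm : ∀ (f : Y → ℝ) (i : Fin N), Measurable (fun ω => f (y i ω)) :=
    fun f i => (measurable_of_countable f).comp (hmeas i)
  have hbnd : ∀ (f : Y → ℝ) (b : Y), |f b| ≤ ∑ a, |f a| := by
    intro f b
    exact Finset.single_le_sum (fun a _ => abs_nonneg (f a)) (Finset.mem_univ b)
  have hInt : ∀ (f : Y → ℝ) (i : Fin N), Integrable (fun ω => f (y i ω)) P := by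
    intro f i
    refine Integrable.mono' (integrable_const (∑ a, |f a|))
      (hm f i).aestronglyMeasurable (ae_of_all _ fun ω => ?_)
    simpa using hbnd f (y i ω)
  have hIntMul : ∀ (f h : Y → ℝ) (i j : Fin N),
      Integrable (fun ω => f (y i ω) * h (y j ω)) P := by
    intro f h i j
    refine Integrable.mono' (integrable_const ((∑ a, |f a|) * (∑ a, |h a|)))
      (((hm f i).mul (hm h j)).aestronglyMeasurable) (ae_of_all _ fun ω => ?_)
    have := mul_le_mul (hbnd f (y i ω)) (hbnd h (y j ω)) (abs_nonneg _)
      (le_trans (abs_nonneg _) (hbnd f (y i ω)))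
    simpa [abs_mul] using this
  -- expectation of a single composition
  have hExp : ∀ (f : Y → ℝ) (i : Fin N), ∫ ω, f (y i ω) ∂P = ∑ a, q a * f a := by
    intro f i
    have hmap : IsProbabilityMeasure (P.map (y i)) :=
      Measure.isProbabilityMeasure_map (hmeas i).aemeasurable
    calc ∫ ω, f (y i ω) ∂P = ∫ a, f a ∂(P.map (y i)) :=
          (integral_map (hmeas i).aemeasurable
            (measurable_of_countable f).aestronglyMeasurable).symm
      _ = ∑ a, ((P.map (y i)) {a}).toReal • f a := integral_fintype .of_finite
      _ = ∑ a, q a * f a := by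
          refine Finset.sum_congr rfl fun a _ => ?_
          rw [Measure.map_apply (hmeas i) (measurableSet_singleton a)]
          have : y i ⁻¹' {a} = {ω | y i ω = a} := rfl
          rw [this, hlaw i a, smul_eq_mul]
  -- expectation of product over distinct indices
  have hExp2 : ∀ (f h : Y → ℝ) (i j : Fin N), i ≠ j →
      ∫ ω, f (y i ω) * h (y j ω) ∂P = (∑ a, q a * f a) * (∑ a, q a * h a) := by
    intro f h i j hij
    have hind : IndepFun (fun ω => f (y i ω)) (fun ω => h (y j ω)) P :=
      (hindep.indepFun hij).comp (measurable_of_countable f) (measurable_of_countable h)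
    have := hind.integral_mul_eq_mul_integral (hInt f i).1 (hInt h j).1
    simpa [hExp f i, hExp h j, funext_iff] using this
  have hφS : ∑ a, q a * φ a = S := by
    rw [hS]
    refine Finset.sum_congr rfl fun a _ => ?_
    simp only [hφdef]
    field_simp [hqne a]
  have hψ0 : ∑ a, q a * ψ a = 0 := by
    rw [← hscore]
    refine Finset.sum_congr rfl fun a _ => ?_
    simp only [hψdef]
    field_simp [hqne a]
  have hψrS : ∑ a, q a * (ψ a * r a) = S := by
    rw [hS]
    refine Finset.sum_congr rfl fun a _ => ?_
    simp only [hψdef]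
    field_simp [hqne a]
  have hNpos : (0 : ℝ) < N := by exact_mod_cast Nat.lt_of_lt_of_le Nat.zero_lt_one hN
  have hNne : (N : ℝ) ≠ 0 := hNpos.ne'
  -- per-index expectation
  have step1 : ∀ i : Fin N,
      ∫ ω, (p (y i ω) / q (y i ω)) * (r (y i ω) - (1 / (N : ℝ)) * ∑ j, r (y j ω)) * g (y i ω) ∂P
        = S - (1 / (N : ℝ)) * S := by
    intro i
    have expand : (fun ω => (p (y i ω) / q (y i ω)) *
        (r (y i ω) - (1 / (N : ℝ)) * ∑ j, r (y j ω)) * g (y i ω))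
        = fun ω => φ (y i ω) - (1 / (N : ℝ)) * ∑ j, ψ (y i ω) * r (y j ω) := by
      funext ω
      simp only [hφdef, hψdef, Finset.mul_sum]
      rw [mul_sub, sub_mul, Finset.mul_sum, Finset.sum_mul]
      congr 1
      exact Finset.sum_congr rfl fun j _ => by ring
    rw [expand]
    have hIntSum : Integrable (fun ω => ∑ j, ψ (y i ω) * r (y j ω)) P :=
      integrable_finset_sum _ (fun j _ => hIntMul ψ r i j)
    rw [integral_sub (hInt φ i) (hIntSum.const_mul _), integral_const_mul,
      integral_finset_sum _ (fun j _ => hIntMul ψ r i j), hExp φ i, hφS]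
    have hsum : ∑ j, ∫ ω, ψ (y i ω) * r (y j ω) ∂P = S := by
      rw [Finset.sum_eq_single i]
      · rw [show (fun ω => ψ (y i ω) * r (y i ω)) = fun ω => (fun a => ψ a * r a) (y i ω) from rfl]
        rw [hExp (fun a => ψ a * r a) i, hψrS]
      · intro j _ hji
        rw [hExp2 ψ r i j (Ne.symm hji), hψ0, zero_mul]
      · intro h; exact absurd (Finset.mem_univ i) h
    rw [hsum]
  -- assemble
  have hInner : ∀ i : Fin N, Integrable (fun ω => (p (y i ω) / q (y i ω)) *
      (r (y i ω) - (1 / (N : ℝ)) * ∑ j, r (y j ω)) * g (y i ω)) P := by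
    intro i
    have expand : (fun ω => (p (y i ω) / q (y i ω)) *
        (r (y i ω) - (1 / (N : ℝ)) * ∑ j, r (y j ω)) * g (y i ω))
        = fun ω => φ (y i ω) - (1 / (N : ℝ)) * ∑ j, ψ (y i ω) * r (y j ω) := by
      funext ω
      simp only [hφdef, hψdef, Finset.mul_sum]
      rw [mul_sub, sub_mul, Finset.mul_sum, Finset.sum_mul]
      congr 1
      exact Finset.sum_congr rfl fun j _ => by ring
    rw [expand]
    exact (hInt φ i).sub ((integrable_finset_sum _ (fun j _ => hIntMul ψ r i j)).const_mul _)
  rw [integral_const_mul, integral_finset_sum _ (fun i _ => hInner i)]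
  rw [Finset.sum_congr rfl (fun i _ => step1 i), Finset.sum_const, Finset.card_univ,
    Fintype.card_fin, nsmul_eq_mul]
  field_simp
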